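/- Consider the optimization problem min{ f(x) + q(x) | G(x) ∈ K } (no abstract set constraint, X = Y = C = ℝ) with f(x) = x, q ≡ 0, G(x) = x², K = (−∞, 0], and x̄ = 0. Then: (i) x̄ is the unique feasible point and hence the unique global minimizer; (ii) x̄ is not M-stationary, i.e., there is no λ ∈ N̄_K(G(x̄)) = [0, ∞) with f'(x̄) + G'(x̄)·λ = 0; (iii) x̄ is approximately stationary: setting x_k = 0, x'_k = −1/(2k), y_k = 1/(4k²), λ_k = k, one has x_k → 0, x'_k → 0, y_k → 0, λ_k ∈ N_K(G(x'_k) − y_k), and f'(x_k) + G'(x'_k)·λ_k = 0 for all k. -/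

import Mathlib

open Filter Topology

/-- Example 6.9: for the problem `min {x | x² ∈ (-∞, 0]}` in `ℝ` with `x₀ = 0`:
(i) `x₀ = 0` is the unique feasible point (hence the unique global minimizer);
(ii) `x₀` is not M-stationary: there is no `λ ∈ N̄_K(G(x₀)) = [0, ∞)` with
`f'(x₀) + G'(x₀)λ = 0`, i.e. `1 + 2·0·λ = 0`;
(iii) `x₀` is approximately stationary, witnessed by `x_k = 0`, `x'_k = -1/(2k)`,
`y_k = 1/(4k²)`, `λ_k = k`: these satisfy `x'_k → 0`, `y_k → 0`,
`λ_k ∈ N_K(G(x'_k) - y_k)` (i.e. `G(x'_k) - y_k = 0` and `λ_k ≥ 0`), and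
`f'(x_k) + G'(x'_k)λ_k = 0`. -/
theorem example_approximate_vs_M_stationarity :
    ({x : ℝ | x ^ 2 ≤ 0} = {0}) ∧
    (¬ ∃ l : ℝ, 0 ≤ l ∧ 1 + 2 * (0 : ℝ) * l = 0) ∧
    (Filter.Tendsto (fun k : ℕ => -1 / (2 * (k : ℝ))) Filter.atTop (nhds 0) ∧
     Filter.Tendsto (fun k : ℕ => 1 / (4 * (k : ℝ) ^ 2)) Filter.atTop (nhds 0) ∧
     ∀ k : ℕ, 0 < k →
       (-1 / (2 * (k : ℝ))) ^ 2 - 1 / (4 * (k : ℝ) ^ 2) = 0 ∧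
       (0 : ℝ) ≤ (k : ℝ) ∧
       1 + 2 * (-1 / (2 * (k : ℝ))) * (k : ℝ) = 0) := by
  refine ⟨?_, ?_, ?_, ?_, ?_⟩
  · ext x
    simp only [Set.mem_setOf_eq, Set.mem_singleton_iff]
    constructor
    · intro h
      nlinarith [sq_nonneg x]
    · rintro rfl; norm_num
  · rintro ⟨l, _, h⟩
    norm_num at h
  · have h := (tendsto_const_div_atTop_nhds_zero_nat (-1/2 : ℝ)).comp tendsto_id
    have : (fun k : ℕ => -1 / (2 * (k : ℝ))) = fun k : ℕ => (-1/2) / (k : ℝ) := by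
      funext k; ring
    rw [this]
    exact tendsto_const_div_atTop_nhds_zero_nat (-1/2)
  · have : (fun k : ℕ => 1 / (4 * (k : ℝ) ^ 2)) = fun k : ℕ => (1/4) / (k : ℝ) / (k : ℝ) := by
      funext k
      rcases eq_or_ne (k : ℝ) 0 with h | h
      · simp [h]
      · field_simp
    rw [this]
    exact (tendsto_const_div_atTop_nhds_zero_nat (1/4)).div_atTop tendsto_natCast_atTop_atTop
  · intro k hk
    have hk' : (k : ℝ) ≠ 0 := Nat.cast_ne_zero.mpr hk.ne'
    refine ⟨by field_simp; ring, Nat.cast_nonneg k, by field_simp; norm_num⟩
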